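/- arXiv:1108.3663 — 5 statements merged into one kernel-verified Lean document; each statement's English description precedes it below -/
import Mathlib

section
/- (General probe version of the limit used in Proposition 2, for a sharp position measurement.) Let w : ℝ → [0,∞) be a probability density with ∫_ℝ p·w(p) dp = 0 and σ² := ∫_ℝ p²·w(p) dp < ∞. Let ψ ∈ L²(ℝ) satisfy ∫_ℝ x²|ψ(x)|² dx < ∞, and let F be a bounded self-adjoint operator on L²(ℝ) with 0 ≤ F ≤ I. For t ∈ ℝ let (U_t ψ)(y) = e^{−ity} ψ(y) and for λ > 0 set h_λ(p) = ⟨U_{λp} ψ | F U_{λp} ψ⟩. Then lim_{λ→0⁺} (1/λ) ∫_ℝ p · w(p) · h_λ(p) dp = 2 σ² · Im ⟨ψ | F(Qψ)⟩, where (Qψ)(y) = y·ψ(y). (This corresponds to the paper's formula lim_{λ→0} Γ^λ[1] = 2⟨φ|P²φ⟩ · Im⟨F(Y)φ | E[1]φ⟩ with w = |φ̂|², ⟨φ|Pφ⟩ = 0 and σ² = ⟨φ|P²φ⟩.) -/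
open MeasureTheory Complex Filter
open scoped InnerProductSpace

private lemma exp_deriv_aux' (y x : ℝ) :
    HasDerivAt (fun t : ℝ => Complex.exp (-(Complex.I * t * y)))
      (-(Complex.I * y) * Complex.exp (-(Complex.I * x * y))) x := by
  have h1 : HasDerivAt (fun s : ℂ => Complex.exp (-(Complex.I * y) * s))
      (-(Complex.I * y) * Complex.exp (-(Complex.I * y) * x)) (x : ℂ) := by
    simpa [mul_comm] using ((hasDerivAt_id (x : ℂ)).const_mul (-(Complex.I * (y:ℂ)))).cexp
  have h2 := h1.comp_ofReal
  have h3 : (fun t : ℝ => Complex.exp (-(Complex.I * y) * t))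
      = fun t : ℝ => Complex.exp (-(Complex.I * t * y)) := by
    funext t; ring_nf
  rw [h3] at h2
  convert h2 using 2
  ring_nf

private lemma exp_lip' (y t s : ℝ) :
    ‖Complex.exp (-(Complex.I * t * y)) - Complex.exp (-(Complex.I * s * y))‖ ≤ |y| * |t - s| := by
  have := Convex.norm_image_sub_le_of_norm_hasDerivWithin_le
    (f := fun t : ℝ => Complex.exp (-(Complex.I * t * y)))
    (f' := fun x : ℝ => -(Complex.I * y) * Complex.exp (-(Complex.I * x * y)))
    (s := Set.univ) (C := |y|)
    (fun x _ => (exp_deriv_aux' y x).hasDerivWithinAt)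
    (fun x _ => by
      rw [norm_mul]
      simp [Complex.norm_exp, Complex.norm_I, Complex.norm_real])
    convex_univ (Set.mem_univ s) (Set.mem_univ t)
  simpa [Real.norm_eq_abs] using this

set_option maxHeartbeats 1600000 in
/-- The limit used in Proposition 2 for a sharp position measurement and a general probe
momentum density `w` with zero mean and second moment `σ²`:
`lim_{λ→0⁺} (1/λ) ∫ p·w(p)·⟨U_{λp}ψ | F U_{λp}ψ⟩ dp = 2σ²·Im ⟨ψ | F(Qψ)⟩`. -/
theorem weak_limit_of_momentum_pointer_first_moment
    (w : ℝ → ℝ) (hw0 : ∀ p, 0 ≤ w p)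
    (hwint : Integrable w volume) (hwprob : ∫ p : ℝ, w p = 1)
    (hwmean : ∫ p : ℝ, p * w p = 0)
    (hwsq : Integrable (fun p : ℝ => p ^ 2 * w p) volume)
    (ψ Qψ : Lp ℂ 2 (volume : Measure ℝ))
    (hQψ : (Qψ : ℝ → ℂ) =ᵐ[volume] fun y => (y : ℂ) * (ψ : ℝ → ℂ) y)
    (F : Lp ℂ 2 (volume : Measure ℝ) →L[ℂ] Lp ℂ 2 (volume : Measure ℝ))
    (hF : F.IsPositive) (hF' : (1 - F).IsPositive)
    (U : ℝ → Lp ℂ 2 (volume : Measure ℝ))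
    (hU : ∀ t : ℝ, (U t : ℝ → ℂ) =ᵐ[volume]
      fun y => Complex.exp (-(Complex.I * (t : ℂ) * (y : ℂ))) * (ψ : ℝ → ℂ) y) :
    Tendsto (fun l : ℝ =>
        (1 / (l : ℂ)) * ∫ p : ℝ, (p : ℂ) * (w p : ℂ) * ⟪U (l * p), F (U (l * p))⟫_ℂ)
      (nhdsWithin 0 (Set.Ioi 0))
      (nhds ((2 * (∫ p : ℝ, p ^ 2 * w p) * Complex.im ⟪ψ, F Qψ⟫_ℂ : ℝ) : ℂ)) := by
  classical
  -- basic facts about U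
  have hU0 : U 0 = ψ := by
    ext1
    refine (hU 0).trans ?_
    filter_upwards with y
    simp
  have hUnorm : ∀ t, ‖U t‖ = ‖ψ‖ := by
    intro t
    rw [Lp.norm_def, Lp.norm_def]
    congr 1
    rw [eLpNorm_congr_ae (hU t)]
    apply eLpNorm_congr_norm_ae
    filter_upwards with y
    simp [Complex.norm_exp]
  have hLip : ∀ t s, ‖U t - U s‖ ≤ |t - s| * ‖Qψ‖ := by
    intro t s
    have hsub : ((U t - U s : Lp ℂ 2 volume) : ℝ → ℂ) =ᵐ[volume]
        fun y => (Complex.exp (-(Complex.I * t * y)) - Complex.exp (-(Complex.I * s * y)))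
          * (ψ : ℝ → ℂ) y := by
      filter_upwards [Lp.coeFn_sub (U t) (U s), hU t, hU s] with y h1 h2 h3
      rw [h1, Pi.sub_apply, h2, h3, sub_mul]
    have key : eLpNorm ((U t - U s : Lp ℂ 2 volume) : ℝ → ℂ) 2 volume
        ≤ eLpNorm (((|t - s| : ℝ) • Qψ : Lp ℂ 2 volume) : ℝ → ℂ) 2 volume := by
      rw [eLpNorm_congr_ae hsub]
      apply eLpNorm_mono_ae
      filter_upwards [Lp.coeFn_smul (|t - s| : ℝ) Qψ, hQψ] with y h1 h2
      rw [h1, Pi.smul_apply, h2]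
      rw [norm_mul, norm_smul, norm_mul]
      simp only [Real.norm_eq_abs, _root_.abs_abs, Complex.norm_real]
      calc ‖Complex.exp (-(Complex.I * t * y)) - Complex.exp (-(Complex.I * s * y))‖
            * ‖(ψ : ℝ → ℂ) y‖
          ≤ (|y| * |t - s|) * ‖(ψ : ℝ → ℂ) y‖ := by
            gcongr; exact exp_lip' y t s
        _ = |t - s| * (|y| * ‖(ψ : ℝ → ℂ) y‖) := by ring
    have h5 := ENNReal.toReal_mono (Lp.eLpNorm_ne_top _) key
    rw [← Lp.norm_def, ← Lp.norm_def] at h5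
    calc ‖U t - U s‖ ≤ ‖(|t - s| : ℝ) • Qψ‖ := h5
      _ = |t - s| * ‖Qψ‖ := by rw [norm_smul]; simp
  -- the key L² limit: difference quotients of U converge to -I • Qψ
  have hk : Tendsto (fun t : ℝ => ((t⁻¹ : ℝ) • (U t - ψ) : Lp ℂ 2 (volume : Measure ℝ)))
      (nhdsWithin 0 {(0:ℝ)}ᶜ) (nhds ((-Complex.I) • Qψ)) := by
    have hnormsq : ∀ f : Lp ℂ 2 (volume : Measure ℝ),
        ‖f‖ ^ 2 = ∫ y, ‖(f : ℝ → ℂ) y‖ ^ 2 := by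
      intro f
      rw [@norm_sq_eq_re_inner ℂ, MeasureTheory.L2.inner_def,
        ← integral_re (L2.integrable_inner f f)]
      congr 1; funext y; rw [← @norm_sq_eq_re_inner ℂ]
    set rep : ℝ → ℝ → ℂ := fun t y =>
      (((t : ℂ))⁻¹ * (Complex.exp (-(Complex.I * t * y)) - 1) + Complex.I * y)
        * (ψ : ℝ → ℂ) y with hrep
    have hcoe : ∀ t : ℝ, (((t⁻¹ : ℝ) • (U t - ψ) - (-Complex.I) • Qψ :
        Lp ℂ 2 (volume : Measure ℝ)) : ℝ → ℂ) =ᵐ[volume] rep t := by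
      intro t
      filter_upwards [Lp.coeFn_sub ((t⁻¹ : ℝ) • (U t - ψ)) ((-Complex.I) • Qψ),
        Lp.coeFn_smul (t⁻¹ : ℝ) (U t - ψ), Lp.coeFn_smul (-Complex.I) Qψ,
        Lp.coeFn_sub (U t) ψ, hU t, hQψ] with y h1 h2 h3 h4 h5 h6
      rw [h1, Pi.sub_apply, h2, Pi.smul_apply, h4, Pi.sub_apply, h5, h3, Pi.smul_apply, h6]
      simp only [smul_eq_mul, Complex.real_smul, Complex.ofReal_inv]
      ring
    rw [tendsto_iff_norm_sub_tendsto_zero]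
    have hnorm : ∀ t : ℝ, ‖((t⁻¹ : ℝ) • (U t - ψ) : Lp ℂ 2 (volume : Measure ℝ))
        - (-Complex.I) • Qψ‖
        = Real.sqrt (∫ y, ‖rep t y‖ ^ 2) := by
      intro t
      rw [← Real.sqrt_sq (norm_nonneg _), hnormsq]
      congr 1
      exact integral_congr_ae ((hcoe t).mono fun y h => by simp only [h])
    have hQint : Integrable (fun y => ‖(Qψ : ℝ → ℂ) y‖ ^ 2) volume := by
      have h := (Lp.memLp Qψ).integrable_norm_rpow two_ne_zero ENNReal.ofNat_ne_top
      simpa [ENNReal.toReal_ofNat, Real.rpow_natCast] using h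
    have htend2 : Tendsto (fun t : ℝ => ∫ y, ‖rep t y‖ ^ 2)
        (nhdsWithin 0 {(0:ℝ)}ᶜ) (nhds 0) := by
      have H : Tendsto (fun t : ℝ => ∫ y, ‖rep t y‖ ^ 2)
          (nhdsWithin 0 {(0:ℝ)}ᶜ) (nhds (∫ (_ : ℝ), (0:ℝ))) := by
        apply tendsto_integral_filter_of_dominated_convergence
          (bound := fun y => 4 * ‖(Qψ : ℝ → ℂ) y‖ ^ 2)
        · filter_upwards with t
          have hc : Continuous fun y : ℝ =>
              ((t:ℂ))⁻¹ * (Complex.exp (-(Complex.I * t * y)) - 1) + Complex.I * (y:ℂ) := by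
            fun_prop
          exact ((hc.aestronglyMeasurable.mul (Lp.aestronglyMeasurable ψ)).norm).pow 2
        · filter_upwards [eventually_mem_nhdsWithin] with t (ht : t ≠ 0)
          filter_upwards [hQψ] with y hy
          have hb : ‖rep t y‖ ≤ 2 * ‖(Qψ : ℝ → ℂ) y‖ := by
            rw [hrep]
            simp only []
            rw [norm_mul]
            have h1 : ‖((t:ℂ))⁻¹ * (Complex.exp (-(Complex.I * t * y)) - 1) + Complex.I * y‖
                ≤ 2 * |y| := by
              apply le_trans (norm_add_le _ _)
              have h2 : ‖((t:ℂ))⁻¹ * (Complex.exp (-(Complex.I * t * y)) - 1)‖ ≤ |y| := by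
                rw [norm_mul]
                have := exp_lip' y t 0
                simp only [Complex.ofReal_zero, mul_zero, zero_mul, Complex.exp_zero,
                  sub_zero] at this
                have h3 : ‖Complex.exp (-(Complex.I * t * y)) - 1‖ ≤ |y| * |t| := by
                  simpa using this
                calc ‖((t:ℂ))⁻¹‖ * ‖Complex.exp (-(Complex.I * t * y)) - 1‖
                    ≤ ‖((t:ℂ))⁻¹‖ * (|y| * |t|) := by gcongr
                  _ = |y| := by
                      rw [norm_inv, Complex.norm_real, Real.norm_eq_abs]
                      field_simp
              have h4 : ‖Complex.I * (y:ℂ)‖ = |y| := by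
                simp [Complex.norm_real]
              linarith [h2, h4.le]
            calc ‖((t:ℂ))⁻¹ * (Complex.exp (-(Complex.I * t * y)) - 1) + Complex.I * y‖
                  * ‖(ψ : ℝ → ℂ) y‖
                ≤ (2 * |y|) * ‖(ψ : ℝ → ℂ) y‖ := by gcongr
              _ = 2 * ‖(Qψ : ℝ → ℂ) y‖ := by
                  rw [hy, norm_mul, Complex.norm_real, Real.norm_eq_abs]; ring
          have hsq : ‖rep t y‖ ^ 2 ≤ (2 * ‖(Qψ : ℝ → ℂ) y‖) ^ 2 :=
            pow_le_pow_left₀ (norm_nonneg _) hb 2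
          rw [Real.norm_eq_abs, _root_.abs_of_nonneg (by positivity)]
          calc ‖rep t y‖ ^ 2 ≤ (2 * ‖(Qψ : ℝ → ℂ) y‖) ^ 2 := hsq
            _ = 4 * ‖(Qψ : ℝ → ℂ) y‖ ^ 2 := by ring
        · exact hQint.const_mul 4
        · filter_upwards with y
          have hd : HasDerivAt (fun t : ℝ => Complex.exp (-(Complex.I * t * y)))
              (-(Complex.I * y)) 0 := by
            simpa using exp_deriv_aux' y 0
          have hs := hasDerivAt_iff_tendsto_slope.mp hd
          have heq : ∀ t : ℝ, t ≠ 0 → rep t y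
              = (slope (fun t : ℝ => Complex.exp (-(Complex.I * t * y))) 0 t
                  + Complex.I * y) * (ψ : ℝ → ℂ) y := by
            intro t ht
            rw [slope_def_module]
            simp only [sub_zero, Complex.ofReal_zero, mul_zero, zero_mul, neg_zero,
              Complex.exp_zero]
            rw [hrep]
            simp only [Complex.real_smul, Complex.ofReal_inv]
          have htt0 : Tendsto (fun t : ℝ =>
              (slope (fun t : ℝ => Complex.exp (-(Complex.I * t * y))) 0 t
                + Complex.I * y) * (ψ : ℝ → ℂ) y) (nhdsWithin 0 {(0:ℝ)}ᶜ) (nhds 0) := by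
            have h5 := (hs.add (tendsto_const_nhds (x := Complex.I * (y:ℂ)))).mul
              (tendsto_const_nhds (x := (ψ : ℝ → ℂ) y))
            simpa using h5
          have htt : Tendsto (fun t : ℝ => rep t y) (nhdsWithin 0 {(0:ℝ)}ᶜ) (nhds 0) := by
            apply htt0.congr'
            filter_upwards [eventually_mem_nhdsWithin] with t (ht : t ≠ 0)
            exact (heq t ht).symm
          simpa using (htt.norm.pow 2)
      simpa using H
    have hcomp := (Real.continuous_sqrt.tendsto 0).comp htend2
    rw [Real.sqrt_zero] at hcomp
    exact Tendsto.congr (fun t => (hnorm t).symm) hcomp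
  -- the derivative of t ↦ ⟪U t, F (U t)⟫ at 0
  set h : ℝ → ℂ := fun t => ⟪U t, F (U t)⟫_ℂ with hhdef
  set D : ℂ := ((2 * Complex.im ⟪ψ, F Qψ⟫_ℂ : ℝ) : ℂ) with hDdef
  set k : ℝ → Lp ℂ 2 (volume : Measure ℝ) := fun t => (t⁻¹ : ℝ) • (U t - ψ) with hkdef
  have hUc : Tendsto U (nhdsWithin 0 {(0:ℝ)}ᶜ) (nhds ψ) := by
    rw [tendsto_iff_norm_sub_tendsto_zero]
    apply squeeze_zero (fun t => norm_nonneg _) (g := fun t => |t| * ‖Qψ‖)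
    · intro t
      simpa [hU0] using hLip t 0
    · have h1 : Tendsto (fun t : ℝ => |t| * ‖Qψ‖) (nhds (0:ℝ)) (nhds (|(0:ℝ)| * ‖Qψ‖)) :=
        (_root_.continuous_abs.tendsto 0).mul_const _
      simp only [abs_zero, zero_mul] at h1
      exact h1.mono_left nhdsWithin_le_nhds
  have hsplit : ∀ t : ℝ, h t - h 0
      = ⟪U t - ψ, F (U t)⟫_ℂ + ⟪ψ, F (U t - ψ)⟫_ℂ := by
    intro t
    rw [hhdef]
    simp only []
    rw [hU0, inner_sub_left, map_sub, inner_sub_right]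
    ring
  have hglim : Tendsto (fun t : ℝ => (h t - h 0) / t) (nhdsWithin 0 {(0:ℝ)}ᶜ) (nhds D) := by
    have hgt : ∀ t : ℝ, t ≠ 0 → (h t - h 0) / t
        = ⟪k t, F (U t)⟫_ℂ + ⟪ψ, F (k t)⟫_ℂ := by
      intro t ht
      rw [hsplit t]
      have e1 : ⟪k t, F (U t)⟫_ℂ = ((t:ℂ))⁻¹ * ⟪U t - ψ, F (U t)⟫_ℂ := by
        simp only [hkdef]
        rw [RCLike.real_smul_eq_coe_smul (K := ℂ), inner_smul_left]
        simp [Complex.conj_ofReal]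
      have e2 : ⟪ψ, F (k t)⟫_ℂ = ((t:ℂ))⁻¹ * ⟪ψ, F (U t - ψ)⟫_ℂ := by
        simp only [hkdef]
        rw [RCLike.real_smul_eq_coe_smul (K := ℂ), F.map_smul, inner_smul_right]
        simp
      rw [e1, e2, div_eq_mul_inv]
      ring
    have hFU : Tendsto (fun t => F (U t)) (nhdsWithin 0 {(0:ℝ)}ᶜ) (nhds (F ψ)) :=
      (F.continuous.tendsto ψ).comp hUc
    have hFk : Tendsto (fun t => F (k t)) (nhdsWithin 0 {(0:ℝ)}ᶜ)
        (nhds (F ((-Complex.I) • Qψ))) := (F.continuous.tendsto _).comp hk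
    have hmain : Tendsto (fun t => ⟪k t, F (U t)⟫_ℂ + ⟪ψ, F (k t)⟫_ℂ)
        (nhdsWithin 0 {(0:ℝ)}ᶜ)
        (nhds (⟪(-Complex.I) • Qψ, F ψ⟫_ℂ + ⟪ψ, F ((-Complex.I) • Qψ)⟫_ℂ)) :=
      (hk.inner hFU).add (tendsto_const_nhds.inner hFk)
    have hsym := hF.isSelfAdjoint.isSymmetric
    have hlim : ⟪(-Complex.I) • Qψ, F ψ⟫_ℂ + ⟪ψ, F ((-Complex.I) • Qψ)⟫_ℂ = D := by
      rw [F.map_smul, inner_smul_left, inner_smul_right]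
      have h1 : ⟪Qψ, F ψ⟫_ℂ = starRingEnd ℂ ⟪ψ, F Qψ⟫_ℂ := by
        have h0 := hsym Qψ ψ
        simp only [ContinuousLinearMap.coe_coe] at h0
        rw [← h0, ← inner_conj_symm]
      rw [h1, hDdef]
      set z := ⟪ψ, F Qψ⟫_ℂ
      simp [Complex.ext_iff, Complex.mul_re, Complex.mul_im]
      ring
    rw [← hlim]
    exact hmain.congr' (by
      filter_upwards [eventually_mem_nhdsWithin] with t (ht : t ≠ 0)
      exact (hgt t ht).symm)
  -- continuity of h
  have hUcont : Continuous U := by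
    have hl : LipschitzWith (Real.toNNReal ‖Qψ‖) U := by
      apply LipschitzWith.of_dist_le_mul
      intro t s
      rw [dist_eq_norm, Real.dist_eq]
      calc ‖U t - U s‖ ≤ |t - s| * ‖Qψ‖ := hLip t s
        _ = (Real.toNNReal ‖Qψ‖ : ℝ) * |t - s| := by
            rw [Real.coe_toNNReal _ (norm_nonneg _)]; ring
    exact hl.continuous
  have hhcont : Continuous h := by
    rw [hhdef]
    exact Continuous.inner hUcont (F.continuous.comp hUcont)
  -- bound on difference quotients
  set C : ℝ := max (2 * ‖F‖ * ‖ψ‖ * ‖Qψ‖) ‖D‖ with hCdef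
  have hdiff : ∀ t : ℝ, ‖h t - h 0‖ ≤ (2 * ‖F‖ * ‖ψ‖ * ‖Qψ‖) * |t| := by
    intro t
    rw [hsplit t]
    have b1 : ‖⟪U t - ψ, F (U t)⟫_ℂ‖ ≤ (|t| * ‖Qψ‖) * (‖F‖ * ‖ψ‖) := by
      calc ‖⟪U t - ψ, F (U t)⟫_ℂ‖ ≤ ‖U t - ψ‖ * ‖F (U t)‖ := norm_inner_le_norm _ _
        _ ≤ (|t| * ‖Qψ‖) * (‖F‖ * ‖ψ‖) := by
            apply mul_le_mul
            · simpa [hU0] using hLip t 0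
            · calc ‖F (U t)‖ ≤ ‖F‖ * ‖U t‖ := F.le_opNorm _
                _ = ‖F‖ * ‖ψ‖ := by rw [hUnorm]
            · exact norm_nonneg _
            · positivity
    have b2 : ‖⟪ψ, F (U t - ψ)⟫_ℂ‖ ≤ ‖ψ‖ * (‖F‖ * (|t| * ‖Qψ‖)) := by
      calc ‖⟪ψ, F (U t - ψ)⟫_ℂ‖ ≤ ‖ψ‖ * ‖F (U t - ψ)‖ := norm_inner_le_norm _ _
        _ ≤ ‖ψ‖ * (‖F‖ * (|t| * ‖Qψ‖)) := by
            apply mul_le_mul_of_nonneg_left _ (norm_nonneg _)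
            calc ‖F (U t - ψ)‖ ≤ ‖F‖ * ‖U t - ψ‖ := F.le_opNorm _
              _ ≤ ‖F‖ * (|t| * ‖Qψ‖) := by
                  apply mul_le_mul_of_nonneg_left _ (norm_nonneg _)
                  simpa [hU0] using hLip t 0
    calc ‖⟪U t - ψ, F (U t)⟫_ℂ + ⟪ψ, F (U t - ψ)⟫_ℂ‖
        ≤ ‖⟪U t - ψ, F (U t)⟫_ℂ‖ + ‖⟪ψ, F (U t - ψ)⟫_ℂ‖ := norm_add_le _ _
      _ ≤ (|t| * ‖Qψ‖) * (‖F‖ * ‖ψ‖) + ‖ψ‖ * (‖F‖ * (|t| * ‖Qψ‖)) := add_le_add b1 b2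
      _ = (2 * ‖F‖ * ‖ψ‖ * ‖Qψ‖) * |t| := by ring
  have hgb : ∀ t : ℝ, t ≠ 0 → ‖(h t - h 0) / t‖ ≤ C := by
    intro t ht
    have habs : |t| > 0 := abs_pos.mpr ht
    rw [norm_div, Complex.norm_real, Real.norm_eq_abs, div_le_iff₀ habs]
    calc ‖h t - h 0‖ ≤ (2 * ‖F‖ * ‖ψ‖ * ‖Qψ‖) * |t| := hdiff t
      _ ≤ C * |t| := by
          apply mul_le_mul_of_nonneg_right (le_max_left _ _) (abs_nonneg t)
  have hDC : ‖D‖ ≤ C := le_max_right _ _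
  -- now the main argument
  set g : ℝ → ℂ := fun t => if t = 0 then D else (h t - h 0) / t with hgdef
  have hgmeas : Measurable g := by
    apply Measurable.ite (MeasurableSet.singleton 0) measurable_const
    exact (hhcont.measurable.sub measurable_const).div Complex.measurable_ofReal
  have hgb' : ∀ t, ‖g t‖ ≤ C := by
    intro t
    by_cases ht : t = 0
    · simpa [hgdef, ht] using hDC
    · simpa [hgdef, ht] using hgb t ht
  have hgc : Tendsto g (nhds 0) (nhds D) := by
    rw [← nhdsNE_sup_pure, tendsto_sup]
    constructor
    · apply hglim.congr'
      filter_upwards [eventually_mem_nhdsWithin] with t (ht : t ≠ 0)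
      simp [hgdef, ht]
    · have hg0 : g 0 = D := by simp [hgdef]
      simpa [hg0] using tendsto_pure_nhds g 0
  have habs : Integrable (fun p : ℝ => p * w p) volume := by
    apply (hwint.add hwsq).mono'
    · exact (measurable_id.aestronglyMeasurable).mul hwint.aestronglyMeasurable
    · filter_upwards with p
      have h1 : |p| ≤ 1 + p ^ 2 := by nlinarith [sq_nonneg (|p| - 1), _root_.sq_abs p]
      have h2 : ‖p * w p‖ = |p| * w p := by
        rw [Real.norm_eq_abs, abs_mul, _root_.abs_of_nonneg (hw0 p)]
      rw [h2]
      calc |p| * w p ≤ (1 + p ^ 2) * w p := by gcongr; exact hw0 p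
        _ = w p + p ^ 2 * w p := by ring
  have int_pwC : Integrable (fun p : ℝ => ((p * w p : ℝ) : ℂ)) volume := habs.ofReal
  have hsqmeasC : AEStronglyMeasurable (fun p : ℝ => ((p ^ 2 * w p : ℝ) : ℂ)) volume :=
    hwsq.ofReal.aestronglyMeasurable
  have int2 : ∀ l : ℝ, Integrable (fun p : ℝ => ((p ^ 2 * w p : ℝ) : ℂ) * g (l * p)) volume := by
    intro l
    apply (hwsq.const_mul C).mono'
    · exact hsqmeasC.mul (hgmeas.comp (measurable_const_mul l)).aestronglyMeasurable
    · filter_upwards with p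
      rw [norm_mul, Complex.norm_real, Real.norm_eq_abs,
        _root_.abs_of_nonneg (mul_nonneg (sq_nonneg p) (hw0 p))]
      calc p ^ 2 * w p * ‖g (l * p)‖ ≤ p ^ 2 * w p * C := by
            gcongr
            · exact mul_nonneg (sq_nonneg p) (hw0 p)
            · exact hgb' _
        _ = C * (p ^ 2 * w p) := by ring
  have hev : ∀ᶠ l : ℝ in nhdsWithin 0 (Set.Ioi 0),
      (1 / (l : ℂ)) * ∫ p : ℝ, (p : ℂ) * (w p : ℂ) * h (l * p)
        = ∫ p : ℝ, ((p ^ 2 * w p : ℝ) : ℂ) * g (l * p) := by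
    filter_upwards [eventually_mem_nhdsWithin] with l (hl : l ∈ Set.Ioi 0)
    have hl0 : l ≠ 0 := ne_of_gt hl
    have hlC : (l : ℂ) ≠ 0 := by exact_mod_cast hl0
    have hpt : ∀ p : ℝ, (p : ℂ) * (w p : ℂ) * h (l * p)
        = h 0 * ((p * w p : ℝ) : ℂ) + (l : ℂ) * (((p ^ 2 * w p : ℝ) : ℂ) * g (l * p)) := by
      intro p
      by_cases hp : p = 0
      · simp [hp]
      · have hlp : l * p ≠ 0 := mul_ne_zero hl0 hp
        have hpC : (p : ℂ) ≠ 0 := by exact_mod_cast hp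
        rw [hgdef]
        simp only [if_neg hlp]
        push_cast
        field_simp
        ring
    have hmean0 : (∫ p : ℝ, ((p * w p : ℝ) : ℂ)) = 0 := by
      have he : (∫ p : ℝ, ((p * w p : ℝ) : ℂ)) = ((∫ p : ℝ, p * w p : ℝ) : ℂ) :=
        integral_ofReal
      rw [he, hwmean, Complex.ofReal_zero]
    rw [integral_congr_ae (Filter.Eventually.of_forall hpt)]
    rw [integral_add (int_pwC.const_mul (h 0)) ((int2 l).const_mul (l : ℂ)),
      integral_const_mul, integral_const_mul, hmean0]
    simp only [mul_zero, zero_add]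
    rw [← mul_assoc, one_div, inv_mul_cancel₀ hlC, one_mul]
  have hfin : Tendsto (fun l : ℝ => ∫ p : ℝ, ((p ^ 2 * w p : ℝ) : ℂ) * g (l * p))
      (nhdsWithin 0 (Set.Ioi 0)) (nhds (∫ p : ℝ, ((p ^ 2 * w p : ℝ) : ℂ) * D)) := by
    apply tendsto_integral_filter_of_dominated_convergence
      (bound := fun p => C * (p ^ 2 * w p))
    · filter_upwards with l
      exact hsqmeasC.mul (hgmeas.comp (measurable_const_mul l)).aestronglyMeasurable
    · filter_upwards with l
      filter_upwards with p
      rw [norm_mul, Complex.norm_real, Real.norm_eq_abs,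
        _root_.abs_of_nonneg (mul_nonneg (sq_nonneg p) (hw0 p))]
      calc p ^ 2 * w p * ‖g (l * p)‖ ≤ p ^ 2 * w p * C := by
            gcongr
            · exact mul_nonneg (sq_nonneg p) (hw0 p)
            · exact hgb' _
        _ = C * (p ^ 2 * w p) := by ring
    · exact hwsq.const_mul C
    · filter_upwards with p
      have hmul : Tendsto (fun l : ℝ => l * p) (nhdsWithin 0 (Set.Ioi 0)) (nhds 0) := by
        have h1 : Tendsto (fun l : ℝ => l * p) (nhds 0) (nhds (0 * p)) :=
          (continuous_id.mul continuous_const).tendsto 0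
        simpa using h1.mono_left nhdsWithin_le_nhds
      exact (tendsto_const_nhds (x := ((p ^ 2 * w p : ℝ) : ℂ))).mul (hgc.comp hmul)
  have hlast : (∫ p : ℝ, ((p ^ 2 * w p : ℝ) : ℂ) * D)
      = ((∫ p : ℝ, p ^ 2 * w p : ℝ) : ℂ) * D := by
    rw [integral_mul_const]
    congr 1
    exact integral_ofReal
  have htarget : ((2 * (∫ p : ℝ, p ^ 2 * w p) * Complex.im ⟪ψ, F Qψ⟫_ℂ : ℝ) : ℂ)
      = ((∫ p : ℝ, p ^ 2 * w p : ℝ) : ℂ) * D := by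
    rw [hDdef]
    push_cast
    ring
  have HFIN : Tendsto (fun l : ℝ =>
      (1 / (l : ℂ)) * ∫ p : ℝ, (p : ℂ) * (w p : ℂ) * h (l * p))
      (nhdsWithin 0 (Set.Ioi 0))
      (nhds (((∫ p : ℝ, p ^ 2 * w p : ℝ) : ℂ) * D)) := by
    rw [← hlast]
    exact Tendsto.congr' (hev.mono fun l hl => hl.symm) hfin
  rw [htarget]
  simpa only [hhdef] using HFIN
end

section
/- (Weak limit of the Lundeen σ_x channel.) Let φ ∈ L²(ℝ) be a unit vector, let I ⊆ ℝ be a bounded interval and Q the orthogonal projection on L²(ℝ) given by multiplication by the indicator of I. For ε > 0 let F_ε = 𝓕* ∘ M_ε ∘ 𝓕 be the spectral projection of momentum onto J_ε = (−ε/2, ε/2), where 𝓕 is the Fourier–Plancherel unitary on L²(ℝ) and M_ε is multiplication by the indicator of J_ε; assume ⟨φ | F_ε φ⟩ ≠ 0. For α ∈ (0, π/2) define Ψ^α = (c₀^α, c₁^α) ∈ L²(ℝ) ⊕ L²(ℝ) with c₀^α = (φ − Qφ) + (cos α)·Qφ and c₁^α = (sin α)·Qφ. Then lim_{α→0⁺}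 [ ⟨c₀^α | F_ε c₁^α⟩ + ⟨c₁^α | F_ε c₀^α⟩ ] / [ 2 sin α · ( ⟨c₀^α | F_ε c₀^α⟩ + ⟨c₁^α | F_ε c₁^α⟩ ) ] = Re( ⟨φ | F_ε (Qφ)⟩ / ⟨φ | F_ε φ⟩ ). (The numerator is ⟨Ψ^α | (F_ε ⊗ σ_x) Ψ^α⟩, i.e. the difference of the two post-selected probabilities when the pointer σ_x is read out, and the denominator contains the total post-selection probability ⟨Ψ^α | (F_ε ⊗ I) Ψ^α⟩; thus the conditional σ_x-average scaled by 1/(2 sin α) converges, as the coupling α → 0, to the real part ξ of ⟨φ | F_ε Q φ⟩ / ⟨φ | F_ε φ⟩, as claimed for the Lundeen et al. scheme.) -/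
open MeasureTheory Complex Filter
open scoped InnerProductSpace

/-- Weak limit of the Lundeen `σ_x` channel: with `Ψ^α = (c₀^α, c₁^α)` the state after the
coupling `e^{−iαQ⊗σ_y}` applied to `φ ⊗ |0⟩`, the conditional `σ_x`-average scaled by
`1/(2 sin α)` converges, as `α → 0⁺`, to `Re(⟨φ|F_ε Qφ⟩/⟨φ|F_εφ⟩)`, where `F_ε` is the spectral
projection of momentum onto `J_ε = (−ε/2, ε/2)`. -/
theorem lundeen_sigma_x_weak_limit
    (φ : Lp ℂ 2 (volume : Measure ℝ)) (hφ : ‖φ‖ = 1)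
    (a b : ℝ)
    (Q : Lp ℂ 2 (volume : Measure ℝ) →L[ℂ] Lp ℂ 2 (volume : Measure ℝ))
    (hQ : ∀ f : Lp ℂ 2 (volume : Measure ℝ),
      (Q f : ℝ → ℂ) =ᵐ[volume] Set.indicator (Set.Ioo a b) (f : ℝ → ℂ))
    (𝓕 : Lp ℂ 2 (volume : Measure ℝ) ≃ₗᵢ[ℂ] Lp ℂ 2 (volume : Measure ℝ))
    (h𝓕 : ∀ f : Lp ℂ 2 (volume : Measure ℝ), Integrable (f : ℝ → ℂ) volume →
      (𝓕 f : ℝ → ℂ) =ᵐ[volume] fun p : ℝ =>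
        ((1 / Real.sqrt (2 * Real.pi) : ℝ) : ℂ) *
          ∫ x : ℝ, (f : ℝ → ℂ) x * Complex.exp (-(Complex.I * (p : ℂ) * (x : ℂ))))
    (ε : ℝ) (hε : 0 < ε)
    (Mε : Lp ℂ 2 (volume : Measure ℝ) →L[ℂ] Lp ℂ 2 (volume : Measure ℝ))
    (hMε : ∀ f : Lp ℂ 2 (volume : Measure ℝ),
      (Mε f : ℝ → ℂ) =ᵐ[volume] Set.indicator (Set.Ioo (-(ε / 2)) (ε / 2)) (f : ℝ → ℂ))
    (Fε : Lp ℂ 2 (volume : Measure ℝ) →L[ℂ] Lp ℂ 2 (volume : Measure ℝ))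
    (hFε : ∀ f : Lp ℂ 2 (volume : Measure ℝ), Fε f = 𝓕.symm (Mε (𝓕 f)))
    (hne : ⟪φ, Fε φ⟫_ℂ ≠ 0) :
    Tendsto (fun α : ℝ =>
        (⟪φ - Q φ + (Real.cos α : ℂ) • Q φ, Fε ((Real.sin α : ℂ) • Q φ)⟫_ℂ +
         ⟪(Real.sin α : ℂ) • Q φ, Fε (φ - Q φ + (Real.cos α : ℂ) • Q φ)⟫_ℂ) /
        (((2 * Real.sin α : ℝ) : ℂ) *
          (⟪φ - Q φ + (Real.cos α : ℂ) • Q φ, Fε (φ - Q φ + (Real.cos α : ℂ) • Q φ)⟫_ℂ +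
           ⟪(Real.sin α : ℂ) • Q φ, Fε ((Real.sin α : ℂ) • Q φ)⟫_ℂ)))
      (nhdsWithin 0 (Set.Ioo 0 (Real.pi / 2)))
      (nhds ((Complex.re (⟪φ, Fε (Q φ)⟫_ℂ / ⟪φ, Fε φ⟫_ℂ) : ℝ) : ℂ)) := by
  -- Mε is self-adjoint
  have hsa : ∀ f g : Lp ℂ 2 (volume : Measure ℝ), ⟪f, Mε g⟫_ℂ = ⟪Mε f, g⟫_ℂ := by
    intro f g
    rw [MeasureTheory.L2.inner_def, MeasureTheory.L2.inner_def]
    apply integral_congr_ae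
    filter_upwards [hMε f, hMε g] with x hf hg
    simp only [hf, hg, RCLike.inner_apply, Set.indicator]
    split_ifs <;> simp
  -- Fε is self-adjoint
  have hFsa : ∀ f g : Lp ℂ 2 (volume : Measure ℝ), ⟪f, Fε g⟫_ℂ = ⟪Fε f, g⟫_ℂ := by
    intro f g
    rw [hFε, hFε]
    have h1 : ⟪f, 𝓕.symm (Mε (𝓕 g))⟫_ℂ = ⟪𝓕 f, Mε (𝓕 g)⟫_ℂ := by
      conv_rhs => rw [show Mε (𝓕 g) = 𝓕 (𝓕.symm (Mε (𝓕 g))) by simp]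
      rw [𝓕.inner_map_map]
    have h2 : ⟪𝓕.symm (Mε (𝓕 f)), g⟫_ℂ = ⟪Mε (𝓕 f), 𝓕 g⟫_ℂ := by
      conv_rhs => rw [show Mε (𝓕 f) = 𝓕 (𝓕.symm (Mε (𝓕 f))) by simp]
      rw [𝓕.inner_map_map]
    rw [h1, h2, hsa]
  set z := ⟪φ, Fε (Q φ)⟫_ℂ with hz
  set w := ⟪φ, Fε φ⟫_ℂ with hw
  -- w is real
  have hwreal : (starRingEnd ℂ) w = w :=
    (inner_conj_symm (Fε φ) φ).trans (hFsa φ φ).symm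
  have hwre : w = (w.re : ℂ) := (Complex.conj_eq_iff_re.mp hwreal).symm
  have hwre0 : w.re ≠ 0 := by
    intro h; apply hne; rw [hwre, h, Complex.ofReal_zero]
  -- conj of z
  have hconjz : ⟪Q φ, Fε φ⟫_ℂ = (starRingEnd ℂ) z :=
    (hFsa (Q φ) φ).trans (inner_conj_symm (Fε (Q φ)) φ).symm
  -- the simplified function
  set N : ℝ → ℂ := fun α =>
    ⟪φ - Q φ + (Real.cos α : ℂ) • Q φ, Fε (Q φ)⟫_ℂ +
      ⟪Q φ, Fε (φ - Q φ + (Real.cos α : ℂ) • Q φ)⟫_ℂ with hN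
  set D : ℝ → ℂ := fun α =>
    ⟪φ - Q φ + (Real.cos α : ℂ) • Q φ, Fε (φ - Q φ + (Real.cos α : ℂ) • Q φ)⟫_ℂ +
      ((Real.sin α : ℂ)) ^ 2 * ⟪Q φ, Fε (Q φ)⟫_ℂ with hD
  have key : ∀ α ∈ Set.Ioo 0 (Real.pi / 2),
      (⟪φ - Q φ + (Real.cos α : ℂ) • Q φ, Fε ((Real.sin α : ℂ) • Q φ)⟫_ℂ +
         ⟪(Real.sin α : ℂ) • Q φ, Fε (φ - Q φ + (Real.cos α : ℂ) • Q φ)⟫_ℂ) /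
        (((2 * Real.sin α : ℝ) : ℂ) *
          (⟪φ - Q φ + (Real.cos α : ℂ) • Q φ, Fε (φ - Q φ + (Real.cos α : ℂ) • Q φ)⟫_ℂ +
           ⟪(Real.sin α : ℂ) • Q φ, Fε ((Real.sin α : ℂ) • Q φ)⟫_ℂ))
      = N α / (2 * D α) := by
    intro α hα
    have hs : Real.sin α ≠ 0 :=
      ne_of_gt (Real.sin_pos_of_pos_of_lt_pi hα.1 (hα.2.trans (by linarith [Real.pi_pos])))
    have hsC : (Real.sin α : ℂ) ≠ 0 := by exact_mod_cast hs
    have e1 : ⟪φ - Q φ + (Real.cos α : ℂ) • Q φ, Fε ((Real.sin α : ℂ) • Q φ)⟫_ℂ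
        = (Real.sin α : ℂ) * ⟪φ - Q φ + (Real.cos α : ℂ) • Q φ, Fε (Q φ)⟫_ℂ := by
      rw [_root_.map_smul, inner_smul_right]
    have e2 : ⟪(Real.sin α : ℂ) • Q φ, Fε (φ - Q φ + (Real.cos α : ℂ) • Q φ)⟫_ℂ
        = (Real.sin α : ℂ) * ⟪Q φ, Fε (φ - Q φ + (Real.cos α : ℂ) • Q φ)⟫_ℂ := by
      rw [inner_smul_left, Complex.conj_ofReal]
    have e3 : ⟪(Real.sin α : ℂ) • Q φ, Fε ((Real.sin α : ℂ) • Q φ)⟫_ℂ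
        = ((Real.sin α : ℂ)) ^ 2 * ⟪Q φ, Fε (Q φ)⟫_ℂ := by
      rw [_root_.map_smul, inner_smul_right, inner_smul_left, Complex.conj_ofReal]; ring
    rw [e1, e2, e3]
    rw [show (((2 * Real.sin α : ℝ)) : ℂ) = (Real.sin α : ℂ) * 2 by push_cast; ring]
    rw [← mul_add, mul_assoc, mul_div_mul_left _ _ hsC]
  rw [show nhds ((Complex.re (z / w) : ℝ) : ℂ) = nhds (N 0 / (2 * D 0)) by
    congr 1
    have hN0 : N 0 = z + (starRingEnd ℂ) z := by
      simp only [hN, Real.cos_zero, Complex.ofReal_one, one_smul, sub_add_cancel, hconjz]; rfl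
    have hD0 : D 0 = w := by
      simp [hD, Real.sin_zero]; exact hw.symm
    rw [hN0, hD0, Complex.add_conj, hwre, Complex.div_ofReal_re]
    push_cast
    rw [mul_div_mul_left _ _ (two_ne_zero (α := ℂ))]]
  apply Tendsto.mono_left _ nhdsWithin_le_nhds |>.congr'
  · exact (eventually_nhdsWithin_of_forall key).mono fun α h => h.symm
  · have hc : Continuous fun α : ℝ => φ - Q φ + (Real.cos α : ℂ) • Q φ := by
      apply Continuous.add continuous_const
      exact ((Complex.continuous_ofReal.comp Real.continuous_cos).smul continuous_const)
    have hNc : Continuous N := by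
      apply Continuous.add
      · exact Continuous.inner hc continuous_const
      · exact Continuous.inner continuous_const (Fε.continuous.comp hc)
    have hDc : Continuous D := by
      apply Continuous.add
      · exact Continuous.inner hc (Fε.continuous.comp hc)
      · exact (((Complex.continuous_ofReal.comp Real.continuous_sin).pow 2).mul
          continuous_const)
    apply Tendsto.div (hNc.tendsto 0) (by exact (continuous_const.mul hDc).tendsto 0)
    have hD0 : D 0 = w := by simp [hD, Real.sin_zero]; exact hw.symm
    rw [hD0]
    simpa using mul_ne_zero (two_ne_zero (α := ℂ)) hne
end

section
/- (Weak limit of the Lundeen σ_y channel.) Let φ ∈ L²(ℝ) be a unit vector, let I ⊆ ℝ be a bounded interval and Q the orthogonal projection on L²(ℝ) given by multiplication by the indicator of I. For ε > 0 let F_ε = 𝓕* ∘ M_ε ∘ 𝓕 be the spectral projection of momentum onto J_ε = (−ε/2, ε/2), where 𝓕 is the Fourier–Plancherel unitary on L²(ℝ) and M_ε is multiplication by the indicator of J_ε; assume ⟨φ | F_ε φ⟩ ≠ 0. For α ∈ (0, π/2) define Ψ^α = (c₀^α, c₁^α) ∈ L²(ℝ) ⊕ L²(ℝ) with c₀^α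 = (φ − Qφ) + (cos α)·Qφ and c₁^α = (sin α)·Qφ. Then lim_{α→0⁺} [ −i⟨c₀^α | F_ε c₁^α⟩ + i⟨c₁^α | F_ε c₀^α⟩ ] / [ 2 sin α · ( ⟨c₀^α | F_ε c₀^α⟩ + ⟨c₁^α | F_ε c₁^α⟩ ) ] = Im( ⟨φ | F_ε (Qφ)⟩ / ⟨φ | F_ε φ⟩ ). (The numerator is ⟨Ψ^α | (F_ε ⊗ σ_y) Ψ^α⟩; thus the conditional σ_y-average scaled by 1/(2 sin α) converges, as the coupling α → 0, to the imaginary part η of ⟨φ | F_ε Q φ⟩ / ⟨φ | F_ε φ⟩, as claimed for the Lundeen et al. scheme.) -/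
open MeasureTheory Complex Filter
open scoped InnerProductSpace

private lemma lundeen_aux_div (s z1 z2 X q : ℂ) (hs : s ≠ 0) :
    ((-Complex.I) * (s*z1) + Complex.I * (s*z2)) / ((2*s) * (X + s*(s*q)))
    = ((-Complex.I)*z1 + Complex.I*z2) / (2*(X + s^2*q)) := by
  rw [show (-Complex.I)*(s*z1) + Complex.I*(s*z2) = s*((-Complex.I)*z1 + Complex.I*z2) by ring,
      show (2*s)*(X + s*(s*q)) = s*(2*(X + s^2*q)) by ring,
      mul_div_mul_left _ _ hs]

private lemma lundeen_aux_num (z : ℂ) :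
    (-Complex.I)*z + Complex.I*(starRingEnd ℂ z) = 2*(z.im:ℂ) := by
  have h := Complex.sub_conj z
  push_cast at h
  have h2 : Complex.I * Complex.I = -1 := Complex.I_mul_I
  linear_combination (-Complex.I) * h + (-2*(z.im:ℂ)) * h2

private lemma lundeen_aux_val (z w : ℂ) (hw : (w.re:ℂ) = w) (hw0 : w ≠ 0) :
    (2*(z.im:ℂ))/(2*w) = ((z/w).im : ℂ) := by
  have hre : w.re ≠ 0 := fun h => hw0 (by rw [← hw, h, Complex.ofReal_zero])
  have hre' : (w.re:ℂ) ≠ 0 := Complex.ofReal_ne_zero.2 hre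
  rw [mul_div_mul_left _ _ (two_ne_zero), ← hw, Complex.div_im, ← hw]
  simp only [Complex.normSq_ofReal, Complex.ofReal_re, Complex.ofReal_im, mul_zero, zero_div,
    sub_zero, zero_mul]
  push_cast
  field_simp

/-- Weak limit of the Lundeen `σ_y` channel: with `Ψ^α = (c₀^α, c₁^α)` the state after the
coupling `e^{−iαQ⊗σ_y}` applied to `φ ⊗ |0⟩`, the conditional `σ_y`-average scaled by
`1/(2 sin α)` converges, as `α → 0⁺`, to `Im(⟨φ|F_ε Qφ⟩/⟨φ|F_εφ⟩)`, where `F_ε` is the spectral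
projection of momentum onto `J_ε = (−ε/2, ε/2)`. -/
theorem lundeen_sigma_y_weak_limit
    (φ : Lp ℂ 2 (volume : Measure ℝ)) (hφ : ‖φ‖ = 1)
    (a b : ℝ)
    (Q : Lp ℂ 2 (volume : Measure ℝ) →L[ℂ] Lp ℂ 2 (volume : Measure ℝ))
    (hQ : ∀ f : Lp ℂ 2 (volume : Measure ℝ),
      (Q f : ℝ → ℂ) =ᵐ[volume] Set.indicator (Set.Ioo a b) (f : ℝ → ℂ))
    (𝓕 : Lp ℂ 2 (volume : Measure ℝ) ≃ₗᵢ[ℂ] Lp ℂ 2 (volume : Measure ℝ))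
    (h𝓕 : ∀ f : Lp ℂ 2 (volume : Measure ℝ), Integrable (f : ℝ → ℂ) volume →
      (𝓕 f : ℝ → ℂ) =ᵐ[volume] fun p : ℝ =>
        ((1 / Real.sqrt (2 * Real.pi) : ℝ) : ℂ) *
          ∫ x : ℝ, (f : ℝ → ℂ) x * Complex.exp (-(Complex.I * (p : ℂ) * (x : ℂ))))
    (ε : ℝ) (hε : 0 < ε)
    (Mε : Lp ℂ 2 (volume : Measure ℝ) →L[ℂ] Lp ℂ 2 (volume : Measure ℝ))
    (hMε : ∀ f : Lp ℂ 2 (volume : Measure ℝ),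
      (Mε f : ℝ → ℂ) =ᵐ[volume] Set.indicator (Set.Ioo (-(ε / 2)) (ε / 2)) (f : ℝ → ℂ))
    (Fε : Lp ℂ 2 (volume : Measure ℝ) →L[ℂ] Lp ℂ 2 (volume : Measure ℝ))
    (hFε : ∀ f : Lp ℂ 2 (volume : Measure ℝ), Fε f = 𝓕.symm (Mε (𝓕 f)))
    (hne : ⟪φ, Fε φ⟫_ℂ ≠ 0) :
    Tendsto (fun α : ℝ =>
        ((-Complex.I) * ⟪φ - Q φ + (Real.cos α : ℂ) • Q φ, Fε ((Real.sin α : ℂ) • Q φ)⟫_ℂ +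
         Complex.I * ⟪(Real.sin α : ℂ) • Q φ, Fε (φ - Q φ + (Real.cos α : ℂ) • Q φ)⟫_ℂ) /
        (((2 * Real.sin α : ℝ) : ℂ) *
          (⟪φ - Q φ + (Real.cos α : ℂ) • Q φ, Fε (φ - Q φ + (Real.cos α : ℂ) • Q φ)⟫_ℂ +
           ⟪(Real.sin α : ℂ) • Q φ, Fε ((Real.sin α : ℂ) • Q φ)⟫_ℂ)))
      (nhdsWithin 0 (Set.Ioo 0 (Real.pi / 2)))
      (nhds ((Complex.im (⟪φ, Fε (Q φ)⟫_ℂ / ⟪φ, Fε φ⟫_ℂ) : ℝ) : ℂ)) := by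
  -- Mε is self-adjoint
  have hM : ∀ u v : Lp ℂ 2 (volume : Measure ℝ), ⟪Mε u, v⟫_ℂ = ⟪u, Mε v⟫_ℂ := by
    intro u v
    rw [MeasureTheory.L2.inner_def, MeasureTheory.L2.inner_def]
    refine integral_congr_ae ?_
    filter_upwards [hMε u, hMε v] with x h1 h2
    rw [RCLike.inner_apply, RCLike.inner_apply, h1, h2]
    by_cases hx : x ∈ Set.Ioo (-(ε / 2)) (ε / 2)
    · simp [Set.indicator_of_mem hx]
    · simp [Set.indicator_of_notMem hx]
  -- Fε is self-adjoint
  have hsa : ∀ f g : Lp ℂ 2 (volume : Measure ℝ), ⟪Fε f, g⟫_ℂ = ⟪f, Fε g⟫_ℂ := by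
    intro f g
    rw [hFε f, hFε g]
    calc ⟪𝓕.symm (Mε (𝓕 f)), g⟫_ℂ
        = ⟪𝓕.symm (Mε (𝓕 f)), 𝓕.symm (𝓕 g)⟫_ℂ := by rw [𝓕.symm_apply_apply]
      _ = ⟪Mε (𝓕 f), 𝓕 g⟫_ℂ := 𝓕.symm.inner_map_map _ _
      _ = ⟪𝓕 f, Mε (𝓕 g)⟫_ℂ := hM _ _
      _ = ⟪𝓕.symm (𝓕 f), 𝓕.symm (Mε (𝓕 g))⟫_ℂ := (𝓕.symm.inner_map_map _ _).symm
      _ = ⟪f, 𝓕.symm (Mε (𝓕 g))⟫_ℂ := by rw [𝓕.symm_apply_apply]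
  set z : ℂ := ⟪φ, Fε (Q φ)⟫_ℂ with hz
  set w : ℂ := ⟪φ, Fε φ⟫_ℂ with hwdef
  have hwconj : starRingEnd ℂ w = w := by
    rw [hwdef, inner_conj_symm, hsa]
  have hwre : (w.re : ℂ) = w := (Complex.conj_eq_iff_re.mp hwconj)
  have hconjz : ⟪Q φ, Fε φ⟫_ℂ = starRingEnd ℂ z := by
    rw [hz, ← inner_conj_symm, hsa]
  -- the auxiliary function
  set u : ℝ → Lp ℂ 2 (volume : Measure ℝ) :=
    fun α => φ - Q φ + (Real.cos α : ℂ) • Q φ with hu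
  set g : ℝ → ℂ := fun α =>
    ((-Complex.I) * ⟪u α, Fε (Q φ)⟫_ℂ + Complex.I * ⟪Q φ, Fε (u α)⟫_ℂ) /
      (2 * (⟪u α, Fε (u α)⟫_ℂ + ((Real.sin α : ℂ))^2 * ⟪Q φ, Fε (Q φ)⟫_ℂ)) with hg
  -- eventual equality
  have hev : ∀ᶠ α in nhdsWithin (0:ℝ) (Set.Ioo 0 (Real.pi / 2)),
      ((-Complex.I) * ⟪u α, Fε ((Real.sin α : ℂ) • Q φ)⟫_ℂ +
         Complex.I * ⟪(Real.sin α : ℂ) • Q φ, Fε (u α)⟫_ℂ) /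
        (((2 * Real.sin α : ℝ) : ℂ) *
          (⟪u α, Fε (u α)⟫_ℂ + ⟪(Real.sin α : ℂ) • Q φ, Fε ((Real.sin α : ℂ) • Q φ)⟫_ℂ))
        = g α := by
    filter_upwards [self_mem_nhdsWithin] with α hα
    have hspos : 0 < Real.sin α :=
      Real.sin_pos_of_pos_of_lt_pi hα.1 (hα.2.trans (by linarith [Real.pi_pos]))
    have hs : (Real.sin α : ℂ) ≠ 0 := by exact_mod_cast hspos.ne'
    rw [hg]
    simp only [ContinuousLinearMap.map_smul, inner_smul_left, inner_smul_right, Complex.conj_ofReal,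
      Complex.ofReal_mul, Complex.ofReal_ofNat]
    exact lundeen_aux_div _ _ _ _ _ hs
  -- continuity / limit of g
  have hU : Tendsto u (nhds 0) (nhds φ) := by
    have : Tendsto (fun α : ℝ => φ - Q φ + (Real.cos α : ℂ) • Q φ) (nhds 0)
        (nhds (φ - Q φ + ((Real.cos 0 : ℝ) : ℂ) • Q φ)) := by
      exact tendsto_const_nhds.add
        ((Complex.continuous_ofReal.tendsto _ |>.comp (Real.continuous_cos.tendsto 0)).smul
          tendsto_const_nhds)
    rw [Real.cos_zero] at this
    simpa only [Complex.ofReal_one, one_smul, sub_add_cancel] using this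
  have hFU : Tendsto (fun α => Fε (u α)) (nhds 0) (nhds (Fε φ)) :=
    (Fε.continuous.tendsto φ).comp hU
  have hsin : Tendsto (fun α : ℝ => ((Real.sin α : ℂ))^2) (nhds 0) (nhds 0) := by
    have : Tendsto (fun α : ℝ => ((Real.sin α : ℂ))^2) (nhds 0)
        (nhds ((((Real.sin 0 : ℝ) : ℂ))^2)) :=
      ((Complex.continuous_ofReal.comp Real.continuous_sin).pow 2).tendsto 0
    simpa only [Real.sin_zero, Complex.ofReal_zero, ne_eq, OfNat.ofNat_ne_zero,
      not_false_eq_true, zero_pow] using this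
  have hnum : Tendsto (fun α => (-Complex.I) * ⟪u α, Fε (Q φ)⟫_ℂ + Complex.I * ⟪Q φ, Fε (u α)⟫_ℂ)
      (nhds 0) (nhds ((-Complex.I) * z + Complex.I * (starRingEnd ℂ z))) := by
    have h1 : Tendsto (fun α => ⟪u α, Fε (Q φ)⟫_ℂ) (nhds 0) (nhds z) :=
      hU.inner tendsto_const_nhds
    have h2 : Tendsto (fun α => ⟪Q φ, Fε (u α)⟫_ℂ) (nhds 0) (nhds (starRingEnd ℂ z)) := by
      rw [← hconjz]
      exact tendsto_const_nhds.inner hFU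
    exact (tendsto_const_nhds.mul h1).add (tendsto_const_nhds.mul h2)
  have hden : Tendsto (fun α => 2 * (⟪u α, Fε (u α)⟫_ℂ + ((Real.sin α : ℂ))^2 * ⟪Q φ, Fε (Q φ)⟫_ℂ))
      (nhds 0) (nhds (2 * w)) := by
    have h3 : Tendsto (fun α => ⟪u α, Fε (u α)⟫_ℂ) (nhds 0) (nhds w) := hU.inner hFU
    have h4 : Tendsto (fun α => ((Real.sin α : ℂ))^2 * ⟪Q φ, Fε (Q φ)⟫_ℂ) (nhds 0) (nhds 0) := by
      simpa using hsin.mul (tendsto_const_nhds (x := ⟪Q φ, Fε (Q φ)⟫_ℂ))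
    simpa using tendsto_const_nhds.mul (h3.add h4)
  have hden0 : (2 : ℂ) * w ≠ 0 := mul_ne_zero two_ne_zero hne
  have hglim : Tendsto g (nhds 0)
      (nhds (((-Complex.I) * z + Complex.I * (starRingEnd ℂ z)) / (2 * w))) :=
    hnum.div hden hden0
  have hval : ((-Complex.I) * z + Complex.I * (starRingEnd ℂ z)) / (2 * w)
      = ((Complex.im (z / w) : ℝ) : ℂ) := by
    rw [lundeen_aux_num z]
    exact lundeen_aux_val z w hwre hne
  refine Tendsto.congr' (EventuallyEq.symm hev) ?_
  rw [← hval]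
  exact hglim.mono_left nhdsWithin_le_nhds
end

section
/- (Validity of the wavefunction-reconstruction formula of Lundeen et al.) Let φ : ℝ → ℂ be a smooth, compactly supported function, and define its Fourier transform φ̂(p) = ∫_ℝ φ(x) e^{−ipx} dx. For ε > 0 define g_ε(x) = (1/2π) ∫_{−ε/2}^{ε/2} φ̂(p) e^{ipx} dp (so that g_ε = F_ε φ, the projection of φ onto momenta in J_ε = (−ε/2, ε/2)). Then for every x₀ ∈ ℝ the iterated limit lim_{ε→0⁺} (2π/ε) · lim_{δ→0⁺} (1/(2δ)) ∫_{x₀−δ}^{x₀+δ} conj(g_ε(x)) · φ(x) dx = conj(φ̂(0)) · φ(x₀). (The integral ∫_{x₀−δ}^{x₀+δ} conj(g_ε(x)) φ(x) dx equals the weakly measured quantity ⟨φ | F_ε Q_I φ⟩ with Q_I the multiplication by the indicator of the interval I = [x₀−δ, x₀+δ]; hence if φ̂(0) ≠ 0 the value φ(x₀) of the wavefunction is recovered, up to the constant conj(φ̂(0)), in the limit of vanishing interval and post-selection window, which is the precise content of Eq. (2)–(3) of Lundeen et al. as formulated in the paper.) -/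
open MeasureTheory Complex Filter
open scoped InnerProductSpace

private lemma avg_tendsto_aux (f : ℝ → ℂ) (hf : Continuous f) (c : ℝ) :
    Tendsto (fun δ : ℝ => ((1 / (2 * δ) : ℝ) : ℂ) * ∫ x in (c - δ)..(c + δ), f x)
      (nhdsWithin 0 (Set.Ioi 0)) (nhds (f c)) := by
  set F : ℝ → ℂ := fun y => ∫ x in c..y, f x with hF
  have hd : HasDerivAt F (f c) c :=
    intervalIntegral.integral_hasDerivAt_right (hf.intervalIntegrable _ _)
      (hf.stronglyMeasurableAtFilter _ _) hf.continuousAt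
  have hs := hasDerivAt_iff_tendsto_slope.mp hd
  have map1 : Tendsto (fun δ : ℝ => c + δ) (nhdsWithin 0 (Set.Ioi 0))
      (nhdsWithin c {c}ᶜ) := by
    rw [tendsto_nhdsWithin_iff]
    refine ⟨?_, ?_⟩
    · have : Tendsto (fun δ : ℝ => c + δ) (nhds 0) (nhds c) := by
        exact (continuous_const.add continuous_id).tendsto' (0 : ℝ) c (by simp)
      exact this.mono_left nhdsWithin_le_nhds
    · filter_upwards [self_mem_nhdsWithin] with δ (hδ : (0:ℝ) < δ)
      simp only [Set.mem_compl_iff, Set.mem_singleton_iff]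
      intro h; nlinarith [congrArg (· - c) h]
  have map2 : Tendsto (fun δ : ℝ => c - δ) (nhdsWithin 0 (Set.Ioi 0))
      (nhdsWithin c {c}ᶜ) := by
    rw [tendsto_nhdsWithin_iff]
    refine ⟨?_, ?_⟩
    · have : Tendsto (fun δ : ℝ => c - δ) (nhds 0) (nhds c) := by
        exact (continuous_const.sub continuous_id).tendsto' (0 : ℝ) c (by simp)
      exact this.mono_left nhdsWithin_le_nhds
    · filter_upwards [self_mem_nhdsWithin] with δ (hδ : (0:ℝ) < δ)
      simp only [Set.mem_compl_iff, Set.mem_singleton_iff]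
      intro h; nlinarith [congrArg (· - c) h]
  have hA : Tendsto (fun δ : ℝ => slope F c (c + δ)) (nhdsWithin 0 (Set.Ioi 0))
      (nhds (f c)) := hs.comp map1
  have hB : Tendsto (fun δ : ℝ => slope F c (c - δ)) (nhdsWithin 0 (Set.Ioi 0))
      (nhds (f c)) := hs.comp map2
  have key : Tendsto (fun δ : ℝ => ((1:ℂ)/2) * (slope F c (c + δ) + slope F c (c - δ)))
      (nhdsWithin 0 (Set.Ioi 0)) (nhds (f c)) := by
    have := (hA.add hB).const_mul ((1:ℂ)/2)
    have h2 : (1:ℂ)/2 * (f c + f c) = f c := by ring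
    rwa [h2] at this
  refine key.congr' ?_
  filter_upwards [self_mem_nhdsWithin] with δ (hδ : (0:ℝ) < δ)
  have hδ0 : δ ≠ 0 := ne_of_gt hδ
  have hFc : F c = 0 := intervalIntegral.integral_same
  have hsplit : ∫ x in (c - δ)..(c + δ), f x = F (c + δ) - F (c - δ) := by
    have hi1 : IntervalIntegrable f volume (c - δ) c := hf.intervalIntegrable _ _
    have hi2 : IntervalIntegrable f volume c (c + δ) := hf.intervalIntegrable _ _
    have h1 := intervalIntegral.integral_add_adjacent_intervals hi1 hi2
    have h2 : ∫ x in (c - δ)..c, f x = -F (c - δ) := by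
      rw [hF]; exact intervalIntegral.integral_symm c (c - δ)
    rw [← h1, h2, hF]; ring
  rw [hsplit]
  rw [slope_def_module, slope_def_module, hFc, sub_zero, sub_zero]
  have e1 : c + δ - c = δ := by ring
  have e2 : c - δ - c = -δ := by ring
  rw [e1, e2]
  rw [Complex.real_smul, Complex.real_smul]
  push_cast
  field_simp
  ring

private lemma cont_param_aux (h : ℝ → ℂ) (hh : Continuous h) (a b : ℝ) (hab : a ≤ b) :
    Continuous fun x : ℝ => ∫ p in a..b, h p * Complex.exp (Complex.I * (p : ℂ) * (x : ℂ)) := by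
  have heq : ∀ x : ℝ, (∫ p in a..b, h p * Complex.exp (Complex.I * (p : ℂ) * (x : ℂ)))
      = ∫ p in Set.Ioc a b, h p * Complex.exp (Complex.I * (p : ℂ) * (x : ℂ)) ∂volume :=
    fun x => intervalIntegral.integral_of_le hab
  simp only [heq]
  apply continuous_of_dominated (bound := fun p => ‖h p‖)
  · intro x
    exact ((hh.mul (by continuity)).aestronglyMeasurable).restrict
  · intro x
    filter_upwards with p
    have : ‖Complex.exp (Complex.I * (p : ℂ) * (x : ℂ))‖ = 1 := by
      rw [Complex.norm_exp]
      simp [Complex.mul_re, Complex.mul_im]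
    rw [norm_mul, this, mul_one]
  · exact (hh.norm.integrableOn_Ioc)
  · filter_upwards with p
    continuity

/-- Validity of the wavefunction-reconstruction formula of Lundeen et al.: for a smooth
compactly supported `φ`, with `g_ε = F_εφ` the projection of `φ` onto momenta in
`J_ε = (−ε/2, ε/2)`, the iterated limit
`lim_{ε→0⁺} (2π/ε) · lim_{δ→0⁺} (1/(2δ)) ∫_{x₀−δ}^{x₀+δ} conj(g_ε(x))·φ(x) dx`
equals `conj(φ̂(0))·φ(x₀)`. -/
theorem lundeen_reconstruction_formula
    (φ : ℝ → ℂ) (hφ : ContDiff ℝ (⊤ : ℕ∞) φ) (hsupp : HasCompactSupport φ)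
    (φhat : ℝ → ℂ)
    (hφhat : φhat = fun p : ℝ => ∫ x : ℝ, φ x * Complex.exp (-(Complex.I * (p : ℂ) * (x : ℂ))))
    (g : ℝ → ℝ → ℂ)
    (hg : g = fun (ε : ℝ) (x : ℝ) => ((1 / (2 * Real.pi) : ℝ) : ℂ) *
      ∫ p in (-(ε / 2))..(ε / 2), φhat p * Complex.exp (Complex.I * (p : ℂ) * (x : ℂ)))
    (x₀ : ℝ) :
    (∀ ε : ℝ, 0 < ε →
      Tendsto (fun δ : ℝ => ((1 / (2 * δ) : ℝ) : ℂ) *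
          ∫ x in (x₀ - δ)..(x₀ + δ), (starRingEnd ℂ) (g ε x) * φ x)
        (nhdsWithin 0 (Set.Ioi 0)) (nhds ((starRingEnd ℂ) (g ε x₀) * φ x₀))) ∧
    Tendsto (fun ε : ℝ => ((2 * Real.pi / ε : ℝ) : ℂ) *
        limUnder (nhdsWithin (0 : ℝ) (Set.Ioi 0)) (fun δ : ℝ => ((1 / (2 * δ) : ℝ) : ℂ) *
          ∫ x in (x₀ - δ)..(x₀ + δ), (starRingEnd ℂ) (g ε x) * φ x))
      (nhdsWithin 0 (Set.Ioi 0)) (nhds ((starRingEnd ℂ) (φhat 0) * φ x₀)) := by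
  have hφc : Continuous φ := hφ.continuous
  have hφint : Integrable φ := hφc.integrable_of_hasCompactSupport hsupp
  -- continuity of φhat
  have hφhat_cont : Continuous φhat := by
    rw [hφhat]
    apply continuous_of_dominated (bound := fun x => ‖φ x‖)
    · intro p
      exact (hφc.mul (by continuity)).aestronglyMeasurable
    · intro p
      filter_upwards with x
      have : ‖Complex.exp (-(Complex.I * (p : ℂ) * (x : ℂ)))‖ = 1 := by
        rw [Complex.norm_exp]
        simp [Complex.mul_re, Complex.mul_im]
      rw [norm_mul, this, mul_one]
    · exact hφint.norm
    · filter_upwards with x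
      continuity
  -- continuity of g ε for ε > 0
  have hgcont : ∀ ε : ℝ, 0 < ε → Continuous (g ε) := by
    intro ε hε
    rw [hg]
    exact continuous_const.mul (cont_param_aux φhat hφhat_cont (-(ε/2)) (ε/2) (by linarith))
  -- part 1
  have key : ∀ ε : ℝ, 0 < ε →
      Tendsto (fun δ : ℝ => ((1 / (2 * δ) : ℝ) : ℂ) *
          ∫ x in (x₀ - δ)..(x₀ + δ), (starRingEnd ℂ) (g ε x) * φ x)
        (nhdsWithin 0 (Set.Ioi 0)) (nhds ((starRingEnd ℂ) (g ε x₀) * φ x₀)) := by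
    intro ε hε
    have hfc : Continuous fun x => (starRingEnd ℂ) (g ε x) * φ x :=
      ((continuous_conj).comp (hgcont ε hε)).mul hφc
    exact avg_tendsto_aux _ hfc x₀
  refine ⟨key, ?_⟩
  -- part 2
  set k : ℝ → ℂ := fun p => (starRingEnd ℂ) (φhat p * Complex.exp (Complex.I * (p : ℂ) * (x₀ : ℂ)))
    with hk
  have hkcont : Continuous k := by
    apply Continuous.comp continuous_conj
    exact hφhat_cont.mul (by continuity)
  have half : Tendsto (fun ε : ℝ => ε / 2) (nhdsWithin (0:ℝ) (Set.Ioi 0))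
      (nhdsWithin (0:ℝ) (Set.Ioi 0)) := by
    rw [tendsto_nhdsWithin_iff]
    refine ⟨?_, ?_⟩
    · have : Tendsto (fun ε : ℝ => ε / 2) (nhds 0) (nhds 0) := by
        simpa using (continuous_id.div_const (2:ℝ)).tendsto (0 : ℝ)
      exact this.mono_left nhdsWithin_le_nhds
    · filter_upwards [self_mem_nhdsWithin] with ε (hε : (0:ℝ) < ε)
      exact Set.mem_Ioi.mpr (by linarith)
  have main : Tendsto (fun ε : ℝ => ((1 / (2 * (ε / 2)) : ℝ) : ℂ) *
        ∫ p in ((0:ℝ) - ε / 2)..((0:ℝ) + ε / 2), k p)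
      (nhdsWithin (0:ℝ) (Set.Ioi 0)) (nhds (k 0)) :=
    (avg_tendsto_aux k hkcont 0).comp half
  have main2 := main.mul_const (φ x₀)
  have hk0 : k 0 * φ x₀ = (starRingEnd ℂ) (φhat 0) * φ x₀ := by
    simp [hk]
  rw [hk0] at main2
  refine main2.congr' ?_ |>.mono_left le_rfl
  filter_upwards [self_mem_nhdsWithin] with ε (hε : (0:ℝ) < ε)
  have hlim : limUnder (nhdsWithin (0 : ℝ) (Set.Ioi 0)) (fun δ : ℝ => ((1 / (2 * δ) : ℝ) : ℂ) *
      ∫ x in (x₀ - δ)..(x₀ + δ), (starRingEnd ℂ) (g ε x) * φ x)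
      = (starRingEnd ℂ) (g ε x₀) * φ x₀ := (key ε hε).limUnder_eq
  have hconjint : (starRingEnd ℂ) (∫ p in (-(ε/2))..(ε/2),
      φhat p * Complex.exp (Complex.I * (p : ℂ) * (x₀ : ℂ)))
      = ∫ p in (-(ε/2))..(ε/2), k p := by
    rw [intervalIntegral, intervalIntegral, map_sub, ← integral_conj, ← integral_conj]
  have hgx : (starRingEnd ℂ) (g ε x₀)
      = ((1 / (2 * Real.pi) : ℝ) : ℂ) * ∫ p in (-(ε/2))..(ε/2), k p := by
    rw [hg]
    simp only [map_mul, Complex.conj_ofReal]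
    rw [hconjint]
  have hzero : ((0:ℝ) - ε / 2) = -(ε/2) := by ring
  have hzero2 : ((0:ℝ) + ε / 2) = ε/2 := by ring
  rw [hzero, hzero2]
  rw [hlim, hgx]
  have hπ : Real.pi ≠ 0 := Real.pi_ne_zero
  have hε0 : ε ≠ 0 := ne_of_gt hε
  have hπC : (Real.pi : ℂ) ≠ 0 := by exact_mod_cast hπ
  push_cast
  field_simp
end

section
/- (The standard model measures the smeared position μ^λ ∗ P^Q — unitary picture.) Let ψ, φ ∈ L²(ℝ) be unit vectors and λ > 0. Define Ψ : ℝ² → ℂ by Ψ(y, z) = ψ(y) · φ(z − λy), which is the wavefunction after the coupling e^{−iλ Q⊗P} acts on ψ ⊗ φ. Then Ψ ∈ L²(ℝ²) with ‖Ψ‖ = 1, and for every Borel set X ⊆ ℝ, ∫_ℝ ∫_{λX} |Ψ(y, z)|² dz dy = (μ^λ ∗ ν)(X), where ν is the Borel measure on ℝ with density |ψ|², μ^λ is the Borel probability measure μ^λ(B) = ∫_{λB} |φ(z)|² dz, and ∗ denotes convolution of measures: (μ^λ ∗ ν)(X) = ∫_ℝ μ^λ(X − y) dν(y). That is, the probability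 that the rescaled pointer position z/λ lies in X equals the probability that a smeared position observable μ^λ ∗ P^Q takes a value in X in the state ψ. -/
open MeasureTheory Complex

private lemma shear_measure_preserving (l : ℝ) :
    MeasurePreserving (fun p : ℝ × ℝ => (p.1, p.2 - l * p.1))
      ((volume : Measure ℝ).prod volume) ((volume : Measure ℝ).prod volume) :=
  MeasureTheory.MeasurePreserving.skew_product (MeasurePreserving.id _)
    (by fun_prop)
    (Filter.Eventually.of_forall fun y => (measurePreserving_sub_right volume (l * y)).map_eq)

private lemma shift_set_integral (g : ℝ → ℝ) (S : Set ℝ) (hS : MeasurableSet S) (c : ℝ) :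
    ∫ z in S, g (z - c) = ∫ z in {u : ℝ | u + c ∈ S}, g z := by
  have hT : MeasurableSet {u : ℝ | u + c ∈ S} := (measurable_add_const c) hS
  rw [← integral_indicator hS, ← integral_indicator hT]
  have : ∀ z : ℝ, S.indicator (fun z => g (z - c)) z
      = ({u : ℝ | u + c ∈ S}.indicator g) (z - c) := by
    intro z
    by_cases h : z ∈ S
    · rw [Set.indicator_of_mem h, Set.indicator_of_mem (by simpa using h)]
    · rw [Set.indicator_of_notMem h, Set.indicator_of_notMem (by simpa using h)]
  simp_rw [this]
  exact integral_sub_right_eq_self ({u : ℝ | u + c ∈ S}.indicator g) c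

/-- The standard model measures the smeared position `μ^λ ∗ P^Q` (unitary picture): the coupled
wavefunction `Ψ(y,z) = ψ(y)φ(z − λy)` is a unit vector of `L²(ℝ²)`, and the probability that the
rescaled pointer `z/λ` lies in a Borel set `X` equals the convolution
`(μ^λ ∗ ν)(X) = ∫ μ^λ(X − y) dν(y)`, where `dν = |ψ|²dy` and `μ^λ(B) = ∫_{λB}|φ(z)|²dz`. -/
theorem standard_model_measures_smeared_position_unitary
    (ψ φ : ℝ → ℂ)
    (hψL2 : MemLp ψ 2 (volume : Measure ℝ)) (hψnorm : ∫ y : ℝ, ‖ψ y‖ ^ 2 = 1)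
    (hφL2 : MemLp φ 2 (volume : Measure ℝ)) (hφnorm : ∫ z : ℝ, ‖φ z‖ ^ 2 = 1)
    (l : ℝ) (hl : 0 < l)
    (Ψ : ℝ × ℝ → ℂ) (hΨ : Ψ = fun p : ℝ × ℝ => ψ p.1 * φ (p.2 - l * p.1)) :
    MemLp Ψ 2 (volume : Measure (ℝ × ℝ)) ∧
    (∫ p : ℝ × ℝ, ‖Ψ p‖ ^ 2 = 1) ∧
    ∀ X : Set ℝ, MeasurableSet X →
      (∫ y : ℝ, ∫ z in {z : ℝ | z / l ∈ X}, ‖Ψ (y, z)‖ ^ 2) =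
        ∫ y : ℝ, (∫ z in {z : ℝ | z / l + y ∈ X}, ‖φ z‖ ^ 2) * ‖ψ y‖ ^ 2 := by
  have hl0 : l ≠ 0 := ne_of_gt hl
  have hψi : Integrable (fun y => ‖ψ y‖ ^ 2) (volume : Measure ℝ) :=
    (memLp_two_iff_integrable_sq_norm hψL2.aestronglyMeasurable).mp hψL2
  have hφi : Integrable (fun z => ‖φ z‖ ^ 2) (volume : Measure ℝ) :=
    (memLp_two_iff_integrable_sq_norm hφL2.aestronglyMeasurable).mp hφL2
  have hvol : (volume : Measure (ℝ × ℝ)) = (volume : Measure ℝ).prod volume :=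
    (Measure.volume_eq_prod ℝ ℝ)
  -- base function MemLp
  have hbase_meas : AEStronglyMeasurable (fun p : ℝ × ℝ => ψ p.1 * φ p.2)
      ((volume : Measure ℝ).prod volume) :=
    hψL2.aestronglyMeasurable.comp_fst.mul hφL2.aestronglyMeasurable.comp_snd
  have hbase : MemLp (fun p : ℝ × ℝ => ψ p.1 * φ p.2) 2 ((volume : Measure ℝ).prod volume) := by
    rw [memLp_two_iff_integrable_sq_norm hbase_meas]
    have := hψi.mul_prod hφi
    simpa [norm_mul, mul_pow] using this
  have hMP := shear_measure_preserving l
  have hΨmem : MemLp Ψ 2 ((volume : Measure ℝ).prod volume) := by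
    have := hbase.comp_measurePreserving hMP
    simpa [hΨ, Function.comp_def] using this
  have hΨmem' : MemLp Ψ 2 (volume : Measure (ℝ × ℝ)) := by rw [hvol]; exact hΨmem
  refine ⟨hΨmem', ?_, ?_⟩
  · -- total norm is 1
    have hΨint : Integrable (fun p : ℝ × ℝ => ‖Ψ p‖ ^ 2) ((volume : Measure ℝ).prod volume) :=
      (memLp_two_iff_integrable_sq_norm hΨmem.aestronglyMeasurable).mp hΨmem
    rw [show (∫ p : ℝ × ℝ, ‖Ψ p‖ ^ 2) = ∫ p : ℝ × ℝ, ‖Ψ p‖ ^ 2 ∂((volume : Measure ℝ).prod volume)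
        from by rw [← hvol]]
    rw [MeasureTheory.integral_prod _ hΨint]
    have : ∀ y : ℝ, (∫ z : ℝ, ‖Ψ (y, z)‖ ^ 2) = ‖ψ y‖ ^ 2 := by
      intro y
      have h1 : (fun z : ℝ => ‖Ψ (y, z)‖ ^ 2)
          = fun z => ‖ψ y‖ ^ 2 * ‖φ (z - l * y)‖ ^ 2 := by
        funext z; simp [hΨ, norm_mul, mul_pow]
      rw [h1, integral_const_mul, integral_sub_right_eq_self (fun z => ‖φ z‖ ^ 2) (l * y),
        hφnorm, mul_one]
    simp_rw [this]
    exact hψnorm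
  · intro X hX
    congr 1
    funext y
    have h1 : (fun z : ℝ => ‖Ψ (y, z)‖ ^ 2)
        = fun z => ‖ψ y‖ ^ 2 * ‖φ (z - l * y)‖ ^ 2 := by
      funext z; simp [hΨ, norm_mul, mul_pow]
    have hS : MeasurableSet {z : ℝ | z / l ∈ X} := (measurable_div_const l) hX
    rw [h1, integral_const_mul,
      shift_set_integral (fun z => ‖φ z‖ ^ 2) _ hS (l * y)]
    have hset : {u : ℝ | u + l * y ∈ {z : ℝ | z / l ∈ X}} = {z : ℝ | z / l + y ∈ X} := by
      ext u
      simp only [Set.mem_setOf_eq]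
      rw [show (u + l * y) / l = u / l + y by field_simp]
    rw [hset, mul_comm]
end
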